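/- Let (X,δ) be a finite metric space, t ≥ 1 a real, H a t-spanner for X, and k ≥ 0 an integer. Let H^(k+1) be the (k+1)-power of H, i.e., the graph on X with an edge between distinct u,v whenever H contains a walk from u to v using at most k+1 edges. Then H^(k+1) is a k-fault-tolerant t-spanner for X. -/

import Mathlib

/-- The weight of a walk in a graph on a metric space: the sum of distances over
its consecutive-vertex pairs. -/
noncomputable def walkWeight {X : Type*} [MetricSpace X] {G : SimpleGraph X} {u v : X}
    (w : G.Walk u v) : ℝ :=
  (w.darts.map fun d => dist d.toProd.1 d.toProd.2).sum

/-- `G` is a `t`-spanner for the metric space `X`. -/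
def IsTSpanner {X : Type*} [MetricSpace X] (G : SimpleGraph X) (t : ℝ) : Prop :=
  ∀ p q : X, ∃ w : G.Walk p q, walkWeight w ≤ t * dist p q

/-- `G` is a `k`-fault-tolerant `t`-spanner for the metric space `X`. -/
def IsFTSpanner {X : Type*} [MetricSpace X] (G : SimpleGraph X) (k : ℕ) (t : ℝ) : Prop :=
  ∀ F : Finset X, F.card ≤ k → ∀ p q : X, p ∉ F → q ∉ F →
    ∃ w : G.Walk p q, (∀ v ∈ w.support, v ∉ F) ∧ walkWeight w ≤ t * dist p q

/-- The total weight of a graph on a finite metric space: the sum of `dist u v`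
over all edges `{u,v}`. -/
noncomputable def graphWeight {X : Type*} [MetricSpace X] [Finite X] (G : SimpleGraph X) : ℝ :=
  ∑ e ∈ (Set.toFinite G.edgeSet).toFinset,
    Sym2.lift ⟨fun a b => dist a b, fun a b => dist_comm a b⟩ e

/-- The minimum spanning tree weight of a finite metric space: the infimum of the
total weight over all connected spanning subgraphs of the complete graph. -/
noncomputable def mstWeight (X : Type*) [MetricSpace X] [Finite X] : ℝ :=
  sInf {w : ℝ | ∃ G : SimpleGraph X, G.Connected ∧ graphWeight G = w}

/-- The degree of a vertex in a graph. -/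
noncomputable def vdeg {X : Type*} (G : SimpleGraph X) (v : X) : ℕ :=
  {u | G.Adj v u}.ncard

/-- A metric space is `2^d`-doubling if every closed ball of radius `2r` can be covered
by at most `2^d` closed balls of radius `r` centered at points of the space. -/
def IsDoubling (X : Type*) [MetricSpace X] (d : ℕ) : Prop :=
  ∀ (x : X) (r : ℝ), 0 < r → ∃ c : Finset X, c.card ≤ 2 ^ d ∧
    Metric.closedBall x (2 * r) ⊆ ⋃ y ∈ c, Metric.closedBall y r

/-- The `s`-power of a graph: an edge between any pair of distinct vertices connected by a
walk with at most `s` edges. -/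
def powerGraph {X : Type*} (G : SimpleGraph X) (s : ℕ) : SimpleGraph X where
  Adj u v := u ≠ v ∧ ∃ w : G.Walk u v, w.length ≤ s
  symm := by
    constructor
    rintro u v ⟨hne, w, hw⟩
    exact ⟨hne.symm, w.reverse, by simpa using hw⟩
  loopless := by
    constructor
    rintro u ⟨hne, -⟩
    exact hne rfl

section Aux

open SimpleGraph

variable {X : Type*} [MetricSpace X] {G : SimpleGraph X}

lemma walkWeight_nil {u : X} : walkWeight (Walk.nil : G.Walk u u) = 0 := rfl

lemma walkWeight_cons {u v w : X} (h : G.Adj u v) (p : G.Walk v w) :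
    walkWeight (Walk.cons h p) = dist u v + walkWeight p := by
  simp [walkWeight]

lemma walkWeight_append {u v w : X} (p : G.Walk u v) (q : G.Walk v w) :
    walkWeight (p.append q) = walkWeight p + walkWeight q := by
  simp [walkWeight, Walk.darts_append]

lemma walkWeight_nonneg {u v : X} (p : G.Walk u v) : 0 ≤ walkWeight p := by
  apply List.sum_nonneg
  intro x hx
  simp only [List.mem_map] at hx
  obtain ⟨d, -, rfl⟩ := hx
  exact dist_nonneg

lemma dist_le_walkWeight {u v : X} (p : G.Walk u v) : dist u v ≤ walkWeight p := by
  induction p with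
  | nil => simp [walkWeight_nil]
  | @cons a b c h p ih =>
    rw [walkWeight_cons]
    calc dist a c ≤ dist a b + dist b c := dist_triangle a b c
      _ ≤ dist a b + walkWeight p := by linarith

lemma walkWeight_dropUntil_le [DecidableEq X] {u v x : X} (w : G.Walk u v) (h : x ∈ w.support) :
    walkWeight (w.dropUntil x h) ≤ walkWeight w := by
  conv_rhs => rw [← w.take_spec h]
  rw [walkWeight_append]
  linarith [walkWeight_nonneg (w.takeUntil x h)]

lemma walkWeight_bypass_le [DecidableEq X] {u v : X} (w : G.Walk u v) :
    walkWeight w.bypass ≤ walkWeight w := by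
  induction w with
  | nil => simp [Walk.bypass]
  | @cons a b c h p ih =>
    simp only [Walk.bypass]
    split_ifs with hs
    · refine (walkWeight_dropUntil_le _ hs).trans (ih.trans ?_)
      rw [walkWeight_cons]
      linarith [dist_nonneg (x := a) (y := b)]
    · rw [walkWeight_cons, walkWeight_cons]
      linarith

/-- Split off the initial faulty run of a walk: there is a first non-faulty vertex `r`
(all vertices before it are faulty). -/
lemma exists_faulty_prefix (F : Finset X) :
    ∀ {a q : X} (w : G.Walk a q), q ∉ F →
    ∃ (r : X) (w1 : G.Walk a r) (w2 : G.Walk r q),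
      w = w1.append w2 ∧ r ∉ F ∧ ∀ x ∈ w1.support, x ≠ r → x ∈ F := by
  intro a q w hq
  induction w with
  | nil =>
    refine ⟨_, Walk.nil, Walk.nil, rfl, hq, ?_⟩
    intro x hx hxa
    simp only [Walk.support_nil, List.mem_singleton] at hx
    exact absurd hx hxa
  | @cons a b q e rest ih =>
    by_cases ha : a ∈ F
    · obtain ⟨r, w1, w2, hsplit, hr, hall⟩ := ih hq
      refine ⟨r, Walk.cons e w1, w2, by rw [hsplit]; rfl, hr, ?_⟩
      intro x hx hxr
      simp only [Walk.support_cons, List.mem_cons] at hx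
      rcases hx with rfl | hx
      · exact ha
      · exact hall x hx hxr
    · refine ⟨a, Walk.nil, Walk.cons e rest, rfl, ha, ?_⟩
      intro x hx hxa
      simp only [Walk.support_nil, List.mem_singleton] at hx
      exact absurd hx hxa

lemma key_lemma (k : ℕ) (F : Finset X) (hF : F.card ≤ k) :
    ∀ n : ℕ, ∀ {p q : X} (w : G.Walk p q), w.length ≤ n → w.support.Nodup →
      p ∉ F → q ∉ F →
      ∃ W : (powerGraph G (k + 1)).Walk p q,
        (∀ v ∈ W.support, v ∉ F) ∧ walkWeight W ≤ walkWeight w := by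
  classical
  intro n
  induction n using Nat.strong_induction_on with
  | _ n ih =>
    intro p q w hlen hnd hp hq
    cases w with
    | nil =>
      refine ⟨Walk.nil, ?_, le_of_eq rfl⟩
      intro v hv
      simp only [Walk.support_nil, List.mem_singleton] at hv
      subst hv; exact hp
    | @cons p p' q e rest =>
      -- decompose the tail into a faulty prefix and the remainder
      obtain ⟨r, w1, w2, hsplit, hrF, hall⟩ := exists_faulty_prefix F rest hq
      have hnd' : (p :: rest.support).Nodup := by
        simpa [Walk.support_cons] using hnd
      have hpns : p ∉ rest.support := (List.nodup_cons.mp hnd').1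
      have hndrest : rest.support.Nodup := (List.nodup_cons.mp hnd').2
      have hsupp : rest.support = w1.support ++ w2.support.tail := by
        rw [hsplit, Walk.support_append]
      have hnd1 : w1.support.Nodup := by
        rw [hsupp] at hndrest
        exact hndrest.of_append_left
      have hrmem1 : r ∈ w1.support := w1.end_mem_support
      have hrrest : r ∈ rest.support := by
        rw [hsupp]; exact List.mem_append_left _ hrmem1
      have hpr : p ≠ r := fun h => hpns (h ▸ hrrest)
      -- bound on the length of w1
      have hlen1 : w1.length ≤ k := by
        have hcard : w1.support.toFinset.card = w1.length + 1 := by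
          rw [List.toFinset_card_of_nodup hnd1, Walk.length_support]
        have hsub : w1.support.toFinset.erase r ⊆ F := by
          intro x hx
          rw [Finset.mem_erase] at hx
          exact hall x (List.mem_toFinset.mp hx.2) hx.1
        have hcarde : (w1.support.toFinset.erase r).card = w1.length := by
          rw [Finset.card_erase_of_mem (List.mem_toFinset.mpr hrmem1), hcard]
          omega
        have := Finset.card_le_card hsub
        omega
      -- the shortcut edge
      have hadj : (powerGraph G (k + 1)).Adj p r :=
        ⟨hpr, Walk.cons e w1, by rw [Walk.length_cons]; omega⟩
      -- nodup for w2
      have hnd2 : w2.support.Nodup := by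
        rw [hsupp] at hndrest
        have htail : w2.support.tail.Nodup := hndrest.of_append_right
        have hdisj : w1.support.Disjoint w2.support.tail :=
          List.disjoint_of_nodup_append hndrest
        have hrnt : r ∉ w2.support.tail := fun h => hdisj hrmem1 h
        rw [w2.support_eq_cons]
        exact List.nodup_cons.mpr ⟨hrnt, htail⟩
      -- lengths
      have hlenrest : rest.length = w1.length + w2.length := by
        rw [hsplit, Walk.length_append]
      have hlenw : (Walk.cons e rest).length = rest.length + 1 := Walk.length_cons _ _
      have h2lt : w2.length < n := by omega
      obtain ⟨W', hW'F, hW'w⟩ := ih w2.length h2lt w2 le_rfl hnd2 hrF hq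
      refine ⟨Walk.cons hadj W', ?_, ?_⟩
      · intro v hv
        simp only [Walk.support_cons, List.mem_cons] at hv
        rcases hv with rfl | hv
        · exact hp
        · exact hW'F v hv
      · have h1 : dist p r ≤ dist p p' + walkWeight w1 := by
          have := dist_le_walkWeight (Walk.cons e w1)
          rwa [walkWeight_cons] at this
        have h2 : walkWeight (Walk.cons e rest) =
            dist p p' + (walkWeight w1 + walkWeight w2) := by
          rw [walkWeight_cons, hsplit, walkWeight_append]
        rw [walkWeight_cons, h2]
        linarith

end Aux

/-- The observation of Levcopoulos, Narasimhan and Smid (restated in Section 1.1 of the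
paper): the `(k+1)`-power of a `t`-spanner is a `k`-fault-tolerant `t`-spanner. -/
theorem power_is_ft_spanner {X : Type*} [MetricSpace X]
    (t : ℝ) (ht : 1 ≤ t) (H : SimpleGraph X) (hH : IsTSpanner H t) (k : ℕ) :
    IsFTSpanner (powerGraph H (k + 1)) k t := by
  classical
  intro F hFk p q hp hq
  obtain ⟨w, hw⟩ := hH p q
  have hnd : w.bypass.support.Nodup := w.bypass_isPath.support_nodup
  obtain ⟨W, h1, h2⟩ := key_lemma k F hFk w.bypass.length w.bypass le_rfl hnd hp hq
  exact ⟨W, h1, h2.trans ((walkWeight_bypass_le w).trans hw)⟩
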